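/- Channel convexity of synergy: for a fixed source distribution p_X, the map p_{Y|X} ↦ S^𝛂(X → Y) is convex; i.e., if p_{Y|X} = θ p^1_{Y|X} + (1−θ) p^2_{Y|X} with θ ∈ [0,1], then S^𝛂(X → Y) ≤ θ S^𝛂_1(X → Y) + (1−θ) S^𝛂_2(X → Y), where S^𝛂_i is computed with target channel p^i_{Y|X}. -/

import Mathlib

open Finset
open scoped BigOperators Classical

/-- Shannon entropy (in bits) of a finite distribution. -/
noncomputable def H {A : Type*} [Fintype A] (p : A → ℝ) : ℝ :=
  ∑ a, (if p a = 0 then 0 else -(p a * Real.logb 2 (p a)))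

/-- Shannon mutual information (in bits) of a finite joint distribution. -/
noncomputable def MI {A B : Type*} [Fintype A] [Fintype B] (p : A → B → ℝ) : ℝ :=
  ∑ a, ∑ b,
    (if p a b = 0 then 0 else
      p a b * Real.logb 2 (p a b / ((∑ b', p a b') * (∑ a', p a' b))))

/-- Conditional mutual information `I(A; B | C)` of a finite joint distribution. -/
noncomputable def CMI {A B C : Type*} [Fintype A] [Fintype B] [Fintype C]
    (p : A → B → C → ℝ) : ℝ :=
  ∑ a, ∑ b, ∑ c,
    (if p a b c = 0 then 0 else
      p a b c * Real.logb 2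
        ((p a b c * (∑ a', ∑ b', p a' b' c)) /
          ((∑ b', p a b' c) * (∑ a', p a' b c))))

def IsJoint {A B : Type*} [Fintype A] [Fintype B] (p : A → B → ℝ) : Prop :=
  (∀ a b, 0 ≤ p a b) ∧ ∑ a, ∑ b, p a b = 1

def IsDist {A : Type*} [Fintype A] (p : A → ℝ) : Prop :=
  (∀ a, 0 ≤ p a) ∧ ∑ a, p a = 1

def IsChannel {A B : Type*} [Fintype A] [Fintype B] (c : A → B → ℝ) : Prop :=
  (∀ a b, 0 ≤ c a b) ∧ ∀ a, ∑ b, c a b = 1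

/-- Given a joint distribution `q` of `(V, X)`, the pair `(V, f(X))` is independent. -/
def IndepWithFun {V X T : Type*} [Fintype V] [Fintype X] (q : V → X → ℝ) (f : X → T) : Prop :=
  ∀ v t, (∑ x, if f x = t then q v x else 0) =
    (∑ x, q v x) * (∑ v', ∑ x, if f x = t then q v' x else 0)

/-- Markov chain `A - B - C`: conditional independence of `A` and `C` given `B`. -/
def MarkovChain {A B C : Type*} [Fintype A] [Fintype B] [Fintype C]
    (q : A → B → C → ℝ) : Prop :=
  ∀ a b c, q a b c * (∑ a', ∑ c', q a' b c') =
    (∑ c', q a b c') * (∑ a', q a' b c)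

/-- Restriction `X^α` of a tuple to the coordinates in `α`. -/
def restr {n : ℕ} {𝓧 : Fin n → Type*} (α : Finset (Fin n)) (x : ∀ i, 𝓧 i) :
    ∀ i : α, 𝓧 i.1 := fun i => x i.1

/-- The set of values `I(V;Y)` achievable through `𝛂`-synergistic channels `p_{V|X}`
(so that `V - X - Y` is a Markov chain and `V ⫫ X^α` for every `α ∈ A`). -/
def synSet {n : ℕ} {𝓧 : Fin n → Type*} [∀ i, Fintype (𝓧 i)] {Y : Type*} [Fintype Y]
    (p : (∀ i, 𝓧 i) → Y → ℝ) (A : Finset (Finset (Fin n))) : Set ℝ :=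
  { r | ∃ (k : ℕ) (c : (∀ i, 𝓧 i) → Fin k → ℝ), IsChannel c ∧
      (∀ α ∈ A, IndepWithFun (fun v x => c x v * (∑ y, p x y)) (restr (𝓧 := 𝓧) α)) ∧
      r = MI (fun (v : Fin k) (y : Y) => ∑ x, c x v * p x y) }

/-- Synergistic disclosure `S^𝛂(X → Y)`. -/
noncomputable def Syn {n : ℕ} {𝓧 : Fin n → Type*} [∀ i, Fintype (𝓧 i)] {Y : Type*} [Fintype Y]
    (p : (∀ i, 𝓧 i) → Y → ℝ) (A : Finset (Finset (Fin n))) : ℝ :=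
  sSup (synSet p A)

/-- The joint distribution of the pair `(X, X)`, used for self-synergy `S^𝛂(X → X)`. -/
noncomputable def selfJoint {X : Type*} [Fintype X] (pX : X → ℝ) : X → X → ℝ :=
  fun x x' => if x' = x then pX x else 0

lemma log_ratio_ge {a b : ℝ} (ha : 0 < a) (hb : 0 < b) :
    a - b ≤ a * Real.log (a / b) := by
  have hx : 0 < b / a := div_pos hb ha
  have hlog := Real.log_le_sub_one_of_pos hx
  have hsplit : Real.log (b / a) = Real.log b - Real.log a :=
    Real.log_div hb.ne' ha.ne'
  have hsplit2 : Real.log (a / b) = Real.log a - Real.log b :=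
    Real.log_div ha.ne' hb.ne'
  have h2 : a * Real.log (b / a) ≤ a * (b / a - 1) :=
    mul_le_mul_of_nonneg_left hlog ha.le
  have h3 : a * (b / a - 1) = b - a := by field_simp
  rw [hsplit] at h2
  rw [hsplit2]
  nlinarith

lemma key_term {a b s T : ℝ} (ha : 0 ≤ a) (hb : 0 ≤ b) (hs : 0 < s) (hT : 0 < T)
    (hab : a ≠ 0 → 0 < b) :
    a * Real.log (s / T) + (a - b * s / T) ≤ (if a = 0 then 0 else a * Real.log (a / b)) := by
  by_cases h : a = 0
  · rw [if_pos h, h]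
    simp only [zero_mul, zero_add, zero_sub, neg_nonpos]
    positivity
  · have hb' := hab h
    have ha' : 0 < a := lt_of_le_of_ne ha (Ne.symm h)
    rw [if_neg h]
    have hlog := Real.log_le_sub_one_of_pos (show 0 < (s/T)/(a/b) by positivity)
    have hsplit : Real.log ((s/T)/(a/b)) = Real.log (s/T) - Real.log (a/b) :=
      Real.log_div (div_pos hs hT).ne' (div_pos ha' hb').ne'
    rw [hsplit] at hlog
    have h2 : a * (Real.log (s/T) - Real.log (a/b)) ≤ a * ((s/T)/(a/b) - 1) :=
      mul_le_mul_of_nonneg_left hlog ha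
    have h3 : a * ((s/T)/(a/b) - 1) = b * s / T - a := by field_simp
    nlinarith

lemma logsum2 {a1 a2 b1 b2 : ℝ} (ha1 : 0 ≤ a1) (ha2 : 0 ≤ a2) (hb1 : 0 ≤ b1) (hb2 : 0 ≤ b2)
    (h1 : a1 ≠ 0 → 0 < b1) (h2 : a2 ≠ 0 → 0 < b2) :
    (if a1 + a2 = 0 then 0 else (a1 + a2) * Real.logb 2 ((a1 + a2) / (b1 + b2))) ≤
      (if a1 = 0 then 0 else a1 * Real.logb 2 (a1 / b1)) +
      (if a2 = 0 then 0 else a2 * Real.logb 2 (a2 / b2)) := by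
  have hL2 : (0:ℝ) < Real.log 2 := Real.log_pos one_lt_two
  by_cases hs : a1 + a2 = 0
  · have e1 : a1 = 0 := by linarith
    have e2 : a2 = 0 := by linarith
    simp [hs, e1, e2]
  · have hspos : 0 < a1 + a2 := lt_of_le_of_ne (by linarith) (Ne.symm hs)
    have hT : 0 < b1 + b2 := by
      rcases eq_or_ne a1 0 with e | e
      · have : a2 ≠ 0 := by intro e2; exact hs (by rw [e, e2]; ring)
        have := h2 this; linarith
      · have := h1 e; linarith
    -- core inequality in natural log
    have k1 := key_term ha1 hb1 hspos hT h1
    have k2 := key_term ha2 hb2 hspos hT h2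
    have hsum : (a1 + a2) * Real.log ((a1 + a2) / (b1 + b2)) ≤
        (if a1 = 0 then 0 else a1 * Real.log (a1 / b1)) +
        (if a2 = 0 then 0 else a2 * Real.log (a2 / b2)) := by
      have hbT : b1 * (a1 + a2) / (b1 + b2) + b2 * (a1 + a2) / (b1 + b2) = a1 + a2 := by
        field_simp
      have hring : (a1 + a2) * Real.log ((a1 + a2) / (b1 + b2)) =
          a1 * Real.log ((a1 + a2) / (b1 + b2)) + a2 * Real.log ((a1 + a2) / (b1 + b2)) := by
        ring
      linarith [k1, k2]
    -- convert to logb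
    simp only [Real.logb, if_neg hs]
    have e1 : (if a1 = 0 then (0:ℝ) else a1 * (Real.log (a1 / b1) / Real.log 2)) =
        (if a1 = 0 then 0 else a1 * Real.log (a1 / b1)) / Real.log 2 := by
      split_ifs <;> simp [mul_div_assoc]
    have e2 : (if a2 = 0 then (0:ℝ) else a2 * (Real.log (a2 / b2) / Real.log 2)) =
        (if a2 = 0 then 0 else a2 * Real.log (a2 / b2)) / Real.log 2 := by
      split_ifs <;> simp [mul_div_assoc]
    rw [e1, e2, ← add_div, ← mul_div_assoc]
    gcongr


lemma mix_term_le {x1 x2 M Q1 Q2 θ : ℝ}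
    (hx1 : 0 ≤ x1) (hx2 : 0 ≤ x2)
    (hM1 : x1 ≤ M) (hQ1 : x1 ≤ Q1) (hM2 : x2 ≤ M) (hQ2 : x2 ≤ Q2)
    (hθ : 0 < θ) (hθ' : θ < 1) :
    (if θ * x1 + (1 - θ) * x2 = 0 then 0 else
      (θ * x1 + (1 - θ) * x2) * Real.logb 2
        ((θ * x1 + (1 - θ) * x2) / (M * (θ * Q1 + (1 - θ) * Q2)))) ≤
    θ * (if x1 = 0 then 0 else x1 * Real.logb 2 (x1 / (M * Q1))) +
      (1 - θ) * (if x2 = 0 then 0 else x2 * Real.logb 2 (x2 / (M * Q2))) := by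
  have hθ1 : (0:ℝ) < 1 - θ := by linarith
  have hM0 : 0 ≤ M := le_trans hx1 hM1
  have hQ10 : 0 ≤ Q1 := le_trans hx1 hQ1
  have hQ20 : 0 ≤ Q2 := le_trans hx2 hQ2
  have h := logsum2 (a1 := θ * x1) (a2 := (1 - θ) * x2)
      (b1 := θ * (M * Q1)) (b2 := (1 - θ) * (M * Q2))
      (by positivity) (by positivity)
      (by positivity) (by positivity)
      (fun h1 => by
        have hx1' : 0 < x1 := lt_of_le_of_ne hx1 (by rintro rfl; exact h1 (by ring))
        have : 0 < M := lt_of_lt_of_le hx1' hM1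
        have : 0 < Q1 := lt_of_lt_of_le hx1' hQ1
        positivity)
      (fun h2 => by
        have hx2' : 0 < x2 := lt_of_le_of_ne hx2 (by rintro rfl; exact h2 (by ring))
        have : 0 < M := lt_of_lt_of_le hx2' hM2
        have : 0 < Q2 := lt_of_lt_of_le hx2' hQ2
        positivity)
  have hb : M * (θ * Q1 + (1 - θ) * Q2) = θ * (M * Q1) + (1 - θ) * (M * Q2) := by ring
  rw [hb]
  refine le_trans h (le_of_eq ?_)
  have e1 : (if θ * x1 = 0 then (0:ℝ) else θ * x1 * Real.logb 2 (θ * x1 / (θ * (M * Q1)))) =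
      θ * (if x1 = 0 then 0 else x1 * Real.logb 2 (x1 / (M * Q1))) := by
    by_cases hx : x1 = 0
    · simp [hx]
    · rw [if_neg hx, if_neg (mul_ne_zero hθ.ne' hx),
        mul_div_mul_left _ _ hθ.ne']
      ring
  have e2 : (if (1 - θ) * x2 = 0 then (0:ℝ) else
      (1 - θ) * x2 * Real.logb 2 ((1 - θ) * x2 / ((1 - θ) * (M * Q2)))) =
      (1 - θ) * (if x2 = 0 then 0 else x2 * Real.logb 2 (x2 / (M * Q2))) := by
    by_cases hx : x2 = 0
    · simp [hx]
    · rw [if_neg hx, if_neg (mul_ne_zero hθ1.ne' hx),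
        mul_div_mul_left _ _ hθ1.ne']
      ring
  rw [e1, e2]

lemma MI_convex {V Y : Type*} [Fintype V] [Fintype Y]
    (q1 q2 : V → Y → ℝ) (hq1 : ∀ v y, 0 ≤ q1 v y) (hq2 : ∀ v y, 0 ≤ q2 v y)
    (hmarg : ∀ v, ∑ y, q1 v y = ∑ y, q2 v y)
    {θ : ℝ} (hθ0 : 0 ≤ θ) (hθ1 : θ ≤ 1) :
    MI (fun v y => θ * q1 v y + (1 - θ) * q2 v y) ≤ θ * MI q1 + (1 - θ) * MI q2 := by
  rcases eq_or_lt_of_le hθ0 with h0 | h0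
  · have : (fun v y => θ * q1 v y + (1 - θ) * q2 v y) = q2 := by
      funext v y; rw [← h0]; ring
    rw [this, ← h0]; ring_nf; exact le_refl _
  rcases eq_or_lt_of_le hθ1 with h1 | h1
  · have : (fun v y => θ * q1 v y + (1 - θ) * q2 v y) = q1 := by
      funext v y; rw [h1]; ring
    rw [this, h1]; ring_nf; exact le_refl _
  -- 0 < θ < 1
  unfold MI
  rw [Finset.mul_sum, Finset.mul_sum, ← Finset.sum_add_distrib]
  refine Finset.sum_le_sum fun v _ => ?_
  rw [Finset.mul_sum, Finset.mul_sum, ← Finset.sum_add_distrib]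
  refine Finset.sum_le_sum fun y _ => ?_
  have hmix_row : ∑ y', (θ * q1 v y' + (1 - θ) * q2 v y') = ∑ y', q1 v y' := by
    rw [Finset.sum_add_distrib, ← Finset.mul_sum, ← Finset.mul_sum, hmarg v]; ring
  have hmix_col : ∑ v', (θ * q1 v' y + (1 - θ) * q2 v' y) =
      θ * ∑ v', q1 v' y + (1 - θ) * ∑ v', q2 v' y := by
    rw [Finset.sum_add_distrib, ← Finset.mul_sum, ← Finset.mul_sum]
  simp only
  rw [hmix_row, hmix_col, ← hmarg v]
  exact mix_term_le (hq1 v y) (hq2 v y)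
    (Finset.single_le_sum (fun y' _ => hq1 v y') (Finset.mem_univ y))
    (Finset.single_le_sum (fun v' _ => hq1 v' y) (Finset.mem_univ v))
    (by rw [hmarg v]; exact Finset.single_le_sum (fun y' _ => hq2 v y') (Finset.mem_univ y))
    (Finset.single_le_sum (fun v' _ => hq2 v' y) (Finset.mem_univ v))
    h0 h1


lemma MI_le_card {V Y : Type*} [Fintype V] [Fintype Y]
    (q : V → Y → ℝ) (hq : ∀ v y, 0 ≤ q v y) :
    MI q ≤ (Fintype.card Y : ℝ) / Real.log 2 := by
  have hL2 : (0:ℝ) < Real.log 2 := Real.log_pos one_lt_two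
  rw [MI, Finset.sum_comm]
  have key : ∀ y : Y, (∑ v, if q v y = 0 then 0 else
      q v y * Real.logb 2 (q v y / ((∑ y', q v y') * (∑ v', q v' y)))) ≤ 1 / Real.log 2 := by
    intro y
    set Q := ∑ v', q v' y with hQdef
    have hQ0 : 0 ≤ Q := Finset.sum_nonneg fun v _ => hq v y
    have step : ∀ v : V, (if q v y = 0 then (0:ℝ) else
        q v y * Real.logb 2 (q v y / ((∑ y', q v y') * Q))) ≤ q v y / (Q * Real.log 2) := by
      intro v
      by_cases h : q v y = 0
      · rw [if_pos h, h]
        positivity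
      · have ha : 0 < q v y := lt_of_le_of_ne (hq v y) (Ne.symm h)
        have hM : 0 < ∑ y', q v y' :=
          lt_of_lt_of_le ha (Finset.single_le_sum (fun y' _ => hq v y') (Finset.mem_univ y))
        have hQ : 0 < Q :=
          lt_of_lt_of_le ha (Finset.single_le_sum (fun v' _ => hq v' y) (Finset.mem_univ v))
        rw [if_neg h, Real.logb, ← mul_div_assoc]
        have hlog : Real.log (q v y / ((∑ y', q v y') * Q)) ≤ q v y / ((∑ y', q v y') * Q) := by
          have hx : 0 < q v y / ((∑ y', q v y') * Q) := by positivity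
          linarith [Real.log_le_sub_one_of_pos hx]
        have hr : q v y / ((∑ y', q v y') * Q) ≤ 1 / Q := by
          rw [div_le_div_iff₀ (by positivity) hQ, one_mul]
          have hle : q v y ≤ ∑ y', q v y' :=
            Finset.single_le_sum (fun y' _ => hq v y') (Finset.mem_univ y)
          nlinarith
        have key3 : q v y * Real.log (q v y / ((∑ y', q v y') * Q)) ≤ q v y / Q := by
          have t1 := mul_le_mul_of_nonneg_left hlog ha.le
          have t2 := mul_le_mul_of_nonneg_left hr ha.le
          rw [mul_one_div] at t2
          linarith
        calc q v y * Real.log (q v y / ((∑ y', q v y') * Q)) / Real.log 2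
            ≤ (q v y / Q) / Real.log 2 := by gcongr
          _ = q v y / (Q * Real.log 2) := by rw [div_div]
    refine le_trans (Finset.sum_le_sum fun v _ => step v) ?_
    rw [← Finset.sum_div]
    rcases eq_or_lt_of_le hQ0 with h | h
    · rw [← hQdef, ← h, zero_div]
      positivity
    · rw [← hQdef, ← div_div, div_self h.ne']
  calc ∑ y, (∑ v, if q v y = 0 then 0 else
        q v y * Real.logb 2 (q v y / ((∑ y', q v y') * (∑ v', q v' y))))
      ≤ ∑ _y : Y, 1 / Real.log 2 := Finset.sum_le_sum fun y _ => key y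
    _ = (Fintype.card Y : ℝ) / Real.log 2 := by
        rw [Finset.sum_const, Finset.card_univ, nsmul_eq_mul]
        ring

lemma MI_nonneg {V Y : Type*} [Fintype V] [Fintype Y]
    (q : V → Y → ℝ) (hq : ∀ v y, 0 ≤ q v y) (hsum : ∑ v, ∑ y, q v y = 1) :
    0 ≤ MI q := by
  have hL2 : (0:ℝ) < Real.log 2 := Real.log_pos one_lt_two
  have step : ∀ v y, (q v y - (∑ y', q v y') * (∑ v', q v' y)) / Real.log 2 ≤
      (if q v y = 0 then (0:ℝ) else
        q v y * Real.logb 2 (q v y / ((∑ y', q v y') * (∑ v', q v' y)))) := by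
    intro v y
    by_cases h : q v y = 0
    · rw [if_pos h, h, zero_sub]
      have : 0 ≤ (∑ y', q v y') * (∑ v', q v' y) :=
        mul_nonneg (Finset.sum_nonneg fun y' _ => hq v y')
          (Finset.sum_nonneg fun v' _ => hq v' y)
      apply div_nonpos_of_nonpos_of_nonneg <;> linarith
    · have ha : 0 < q v y := lt_of_le_of_ne (hq v y) (Ne.symm h)
      have hM : 0 < ∑ y', q v y' :=
        lt_of_lt_of_le ha (Finset.single_le_sum (fun y' _ => hq v y') (Finset.mem_univ y))
      have hQ : 0 < ∑ v', q v' y :=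
        lt_of_lt_of_le ha (Finset.single_le_sum (fun v' _ => hq v' y) (Finset.mem_univ v))
      rw [if_neg h, Real.logb, ← mul_div_assoc]
      exact div_le_div_of_nonneg_right (log_ratio_ge ha (mul_pos hM hQ)) hL2.le
  have total : ∑ v, ∑ y, ((q v y - (∑ y', q v y') * (∑ v', q v' y)) / Real.log 2) = 0 := by
    have e1 : ∑ v, ∑ y, (∑ y', q v y') * (∑ v', q v' y)
        = (∑ v, ∑ y', q v y') * (∑ y, ∑ v', q v' y) := by
      rw [Finset.sum_mul_sum]
    have e2 : ∑ y, ∑ v', q v' y = 1 := by rw [Finset.sum_comm]; exact hsum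
    have : ∑ v, ∑ y, (q v y - (∑ y', q v y') * (∑ v', q v' y)) = 0 := by
      rw [Finset.sum_congr rfl fun v _ => Finset.sum_sub_distrib _ _, Finset.sum_sub_distrib,
        e1, hsum, e2]
      ring
    simp only [← Finset.sum_div]
    rw [this, zero_div]
  rw [MI]
  have hle := Finset.sum_le_sum fun v (_ : v ∈ Finset.univ) =>
    Finset.sum_le_sum fun y (_ : y ∈ Finset.univ) => step v y
  calc (0:ℝ) = ∑ v, ∑ y, ((q v y - (∑ y', q v y') * (∑ v', q v' y)) / Real.log 2) := total.symm
    _ ≤ _ := hle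



lemma triple_swap {X V Y : Type*} [Fintype X] [Fintype V] [Fintype Y] (f : X → V → Y → ℝ) :
    ∑ v, ∑ y, ∑ x, f x v y = ∑ x, ∑ v, ∑ y, f x v y := by
  rw [Finset.sum_congr rfl fun v (_ : v ∈ Finset.univ) => Finset.sum_comm,
    Finset.sum_comm]

/-- channel convexity of synergy, `p_{Y|X} ↦ S^𝛂(X → Y)` is convex
for fixed source distribution `p_X`. -/
theorem syn_channel_convexity
    {n : ℕ} {𝓧 : Fin n → Type*} [∀ i, Fintype (𝓧 i)] {Y : Type*} [Fintype Y]
    (pX : (∀ i, 𝓧 i) → ℝ) (hpX : IsDist pX)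
    (W1 W2 : (∀ i, 𝓧 i) → Y → ℝ) (h1 : IsChannel W1) (h2 : IsChannel W2)
    (θ : ℝ) (hθ : θ ∈ Set.Icc (0:ℝ) 1)
    (A : Finset (Finset (Fin n))) :
    Syn (fun x y => pX x * (θ * W1 x y + (1 - θ) * W2 x y)) A ≤
      θ * Syn (fun x y => pX x * W1 x y) A +
        (1 - θ) * Syn (fun x y => pX x * W2 x y) A := by
  obtain ⟨hθ0, hθ1⟩ := hθ
  have hθ1' : (0:ℝ) ≤ 1 - θ := by linarith
  have hrow1 : ∀ x, ∑ y, pX x * W1 x y = pX x := fun x => by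
    rw [← Finset.mul_sum, h1.2 x, mul_one]
  have hrow2 : ∀ x, ∑ y, pX x * W2 x y = pX x := fun x => by
    rw [← Finset.mul_sum, h2.2 x, mul_one]
  have hrowm : ∀ x, ∑ y, pX x * (θ * W1 x y + (1 - θ) * W2 x y) = pX x := fun x => by
    rw [← Finset.mul_sum, Finset.sum_add_distrib, ← Finset.mul_sum, ← Finset.mul_sum,
      h1.2 x, h2.2 x]
    ring
  have hp1nn : ∀ x y, 0 ≤ pX x * W1 x y := fun x y => mul_nonneg (hpX.1 x) (h1.1 x y)
  have hp2nn : ∀ x y, 0 ≤ pX x * W2 x y := fun x y => mul_nonneg (hpX.1 x) (h2.1 x y)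
  -- generic facts about synSet for a joint with nonneg entries and rows summing to pX
  have hjointnn : ∀ (p : (∀ i, 𝓧 i) → Y → ℝ), (∀ x y, 0 ≤ p x y) →
      ∀ (k : ℕ) (c : (∀ i, 𝓧 i) → Fin k → ℝ), IsChannel c →
      ∀ (v : Fin k) (y : Y), 0 ≤ ∑ x, c x v * p x y := by
    intro p hp k c hc v y
    exact Finset.sum_nonneg fun x _ => mul_nonneg (hc.1 x v) (hp x y)
  have hbdd : ∀ (p : (∀ i, 𝓧 i) → Y → ℝ), (∀ x y, 0 ≤ p x y) →
      BddAbove (synSet p A) := by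
    intro p hp
    refine ⟨(Fintype.card Y : ℝ) / Real.log 2, ?_⟩
    rintro r ⟨k, c, hc, hind, rfl⟩
    exact MI_le_card _ (hjointnn p hp k c hc)
  have hnnSyn : ∀ (p : (∀ i, 𝓧 i) → Y → ℝ), (∀ x y, 0 ≤ p x y) →
      (∀ x, ∑ y, p x y = pX x) → 0 ≤ Syn p A := by
    intro p hp hrow
    refine Real.sSup_nonneg ?_
    rintro r ⟨k, c, hc, hind, rfl⟩
    refine MI_nonneg _ (hjointnn p hp k c hc) ?_
    rw [triple_swap (fun x v y => c x v * p x y)]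
    have : ∀ x, ∑ v, ∑ y, c x v * p x y = pX x := by
      intro x
      rw [← Finset.sum_mul_sum, hc.2 x, one_mul, hrow x]
    rw [Finset.sum_congr rfl fun x _ => this x, hpX.2]
  have hS1 : 0 ≤ Syn (fun x y => pX x * W1 x y) A := hnnSyn _ hp1nn hrow1
  have hS2 : 0 ≤ Syn (fun x y => pX x * W2 x y) A := hnnSyn _ hp2nn hrow2
  refine Real.sSup_le ?_ (add_nonneg (mul_nonneg hθ0 hS1) (mul_nonneg hθ1' hS2))
  rintro r ⟨k, c, hc, hind, rfl⟩
  set q1 : Fin k → Y → ℝ := fun v y => ∑ x, c x v * (pX x * W1 x y) with hq1def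
  set q2 : Fin k → Y → ℝ := fun v y => ∑ x, c x v * (pX x * W2 x y) with hq2def
  have hmix : (fun (v : Fin k) (y : Y) =>
        ∑ x, c x v * ((fun x y => pX x * (θ * W1 x y + (1 - θ) * W2 x y)) x y)) =
      fun v y => θ * q1 v y + (1 - θ) * q2 v y := by
    funext v y
    rw [hq1def, hq2def]
    simp only
    rw [Finset.mul_sum, Finset.mul_sum, ← Finset.sum_add_distrib]
    exact Finset.sum_congr rfl fun x _ => by ring
  rw [hmix]
  have hmargs : ∀ v, (∑ y, q1 v y = ∑ x, c x v * pX x) ∧ (∑ y, q2 v y = ∑ x, c x v * pX x) := by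
    intro v
    constructor
    · rw [hq1def]
      simp only
      rw [Finset.sum_comm]
      exact Finset.sum_congr rfl fun x _ => by rw [← Finset.mul_sum, hrow1 x]
    · rw [hq2def]
      simp only
      rw [Finset.sum_comm]
      exact Finset.sum_congr rfl fun x _ => by rw [← Finset.mul_sum, hrow2 x]
  have hmarg : ∀ v, ∑ y, q1 v y = ∑ y, q2 v y := fun v =>
    ((hmargs v).1).trans ((hmargs v).2).symm
  have hq1nn : ∀ v y, 0 ≤ q1 v y := hjointnn _ hp1nn k c hc
  have hq2nn : ∀ v y, 0 ≤ q2 v y := hjointnn _ hp2nn k c hc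
  have step := MI_convex q1 q2 hq1nn hq2nn hmarg hθ0 hθ1
  -- feasibility transfer
  have hfun1 : (fun (v : Fin k) x => c x v * (∑ y, pX x * W1 x y)) =
      (fun (v : Fin k) x => c x v *
        (∑ y, (fun x y => pX x * (θ * W1 x y + (1 - θ) * W2 x y)) x y)) := by
    funext v x
    simp only
    rw [hrow1 x, hrowm x]
  have hfun2 : (fun (v : Fin k) x => c x v * (∑ y, pX x * W2 x y)) =
      (fun (v : Fin k) x => c x v *
        (∑ y, (fun x y => pX x * (θ * W1 x y + (1 - θ) * W2 x y)) x y)) := by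
    funext v x
    simp only
    rw [hrow2 x, hrowm x]
  have m1 : MI q1 ∈ synSet (fun x y => pX x * W1 x y) A := by
    refine ⟨k, c, hc, ?_, rfl⟩
    intro α hα
    have := hind α hα
    rw [show (fun (v : Fin k) x => c x v * (∑ y, (fun x y => pX x * W1 x y) x y)) =
        (fun (v : Fin k) x => c x v *
          (∑ y, (fun x y => pX x * (θ * W1 x y + (1 - θ) * W2 x y)) x y)) from hfun1]
    exact this
  have m2 : MI q2 ∈ synSet (fun x y => pX x * W2 x y) A := by
    refine ⟨k, c, hc, ?_, rfl⟩
    intro α hα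
    have := hind α hα
    rw [show (fun (v : Fin k) x => c x v * (∑ y, (fun x y => pX x * W2 x y) x y)) =
        (fun (v : Fin k) x => c x v *
          (∑ y, (fun x y => pX x * (θ * W1 x y + (1 - θ) * W2 x y)) x y)) from hfun2]
    exact this
  have le1 : MI q1 ≤ Syn (fun x y => pX x * W1 x y) A := le_csSup (hbdd _ hp1nn) m1
  have le2 : MI q2 ≤ Syn (fun x y => pX x * W2 x y) A := le_csSup (hbdd _ hp2nn) m2
  calc MI (fun v y => θ * q1 v y + (1 - θ) * q2 v y)
      ≤ θ * MI q1 + (1 - θ) * MI q2 := step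
    _ ≤ θ * Syn (fun x y => pX x * W1 x y) A + (1 - θ) * Syn (fun x y => pX x * W2 x y) A :=
        add_le_add (mul_le_mul_of_nonneg_left le1 hθ0) (mul_le_mul_of_nonneg_left le2 hθ1')
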